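/- Let A be an n×n real symmetric positive definite matrix with integer entries and eigenvalues λ₁ ≥ ⋯ ≥ λ_n > 0. Define relgap(A) = min_{j>i, λ_i ≠ λ_j} (λ_i − λ_j)/λ_j (the minimal relative gap between distinct eigenvalues). Then relgap(A)⁻¹ ≤ 8^n · (4n)^(n²) · (max_{i,j}|A_{ij}|)^(2n²), i.e. relgap(A) ≥ 8^(−n) (4n)^(−n²) (max|A_{ij}|)^(−2n²). -/

import Mathlib

set_option maxHeartbeats 1000000
set_option linter.unusedTactic false

open Polynomial Matrix


lemma my_eval_charpoly {ι : Type*} [Fintype ι] [DecidableEq ι] {K : Type*} [CommRing K]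
    (M : Matrix ι ι K) (x : K) :
    (M.charpoly).eval x = (x • (1 : Matrix ι ι K) - M).det := by
  rw [Matrix.charpoly, ← Polynomial.coe_evalRingHom, RingHom.map_det]
  congr 1
  ext i j
  by_cases h : i = j
  · subst h; simp [charmatrix_apply_eq, Matrix.one_apply]
  · simp [charmatrix_apply_ne _ _ _ h, Matrix.one_apply, h]

lemma eig_root {ι : Type*} [Fintype ι] [DecidableEq ι] {K : Type*} [Field K]
    {M : Matrix ι ι K} {v : ι → K} {x : K} (hv : v ≠ 0) (h : M.mulVec v = x • v) :
    (M.charpoly).eval x = 0 := by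
  rw [my_eval_charpoly]
  rw [← Matrix.exists_mulVec_eq_zero_iff]
  exact ⟨v, hv, by rw [Matrix.sub_mulVec, Matrix.smul_mulVec, Matrix.one_mulVec, h, sub_self]⟩

lemma root_eig {ι : Type*} [Fintype ι] [DecidableEq ι] {K : Type*} [Field K]
    {M : Matrix ι ι K} {x : K} (h : (M.charpoly).eval x = 0) :
    ∃ v ≠ 0, M.mulVec v = x • v := by
  rw [my_eval_charpoly] at h
  obtain ⟨v, hv, hv2⟩ := (Matrix.exists_mulVec_eq_zero_iff).mpr h
  refine ⟨v, hv, ?_⟩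
  rw [Matrix.sub_mulVec, Matrix.smul_mulVec, Matrix.one_mulVec, sub_eq_zero] at hv2
  exact hv2.symm

lemma eig_norm_le {ι : Type*} [Fintype ι] {𝕜 : Type*} [NormedField 𝕜]
    {M : Matrix ι ι 𝕜} {v : ι → 𝕜} {z : 𝕜} (hv : v ≠ 0) (h : M.mulVec v = z • v)
    {R : ℝ} (hR : ∀ i, ∑ j, ‖M i j‖ ≤ R) : ‖z‖ ≤ R := by
  obtain ⟨i₁, hi₁⟩ := Function.ne_iff.mp hv
  obtain ⟨i₀, -, hmax⟩ := Finset.exists_max_image Finset.univ (fun i => ‖v i‖) ⟨i₁, Finset.mem_univ _⟩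
  have hpos : 0 < ‖v i₀‖ := lt_of_lt_of_le (norm_pos_iff.mpr hi₁) (hmax i₁ (Finset.mem_univ _))
  have h0 : z * v i₀ = ∑ j, M i₀ j * v j := by
    have := congrFun h i₀
    simp only [Matrix.mulVec, dotProduct, Pi.smul_apply, smul_eq_mul] at this
    rw [← this]
  have : ‖z‖ * ‖v i₀‖ ≤ R * ‖v i₀‖ := by
    calc ‖z‖ * ‖v i₀‖ = ‖z * v i₀‖ := (norm_mul _ _).symm
    _ = ‖∑ j, M i₀ j * v j‖ := by rw [h0]
    _ ≤ ∑ j, ‖M i₀ j * v j‖ := norm_sum_le _ _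
    _ ≤ ∑ j, ‖M i₀ j‖ * ‖v j‖ := Finset.sum_le_sum fun j _ => norm_mul_le _ _
    _ ≤ ∑ j, ‖M i₀ j‖ * ‖v i₀‖ :=
      Finset.sum_le_sum fun j _ => mul_le_mul_of_nonneg_left (hmax j (Finset.mem_univ _)) (norm_nonneg _)
    _ = (∑ j, ‖M i₀ j‖) * ‖v i₀‖ := by rw [Finset.sum_mul]
    _ ≤ R * ‖v i₀‖ := mul_le_mul_of_nonneg_right (hR i₀) (norm_nonneg _)
  exact le_of_mul_le_mul_right this hpos

lemma my_choose_le (d i : ℕ) : d.choose i ≤ 2 ^ d := by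
  rcases le_or_gt i d with h | h
  · calc d.choose i ≤ ∑ m ∈ Finset.range (d+1), d.choose m :=
        Finset.single_le_sum (fun m _ => Nat.zero_le _) (Finset.mem_range.mpr (Nat.lt_succ_of_le h))
    _ = 2 ^ d := Nat.sum_range_choose d
  · rw [Nat.choose_eq_zero_of_lt h]; positivity

lemma charpoly_coeff_bound {ι : Type*} [Fintype ι] [DecidableEq ι] [Nonempty ι]
    (B : Matrix ι ι ℤ) {R : ℝ} (hR1 : 1 ≤ R)
    (hR : ∀ i, ∑ j, |((B i j : ℤ) : ℝ)| ≤ R) (k : ℕ) :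
    |((B.charpoly.coeff k : ℤ) : ℝ)| ≤ R ^ (Fintype.card ι) * 2 ^ (Fintype.card ι) := by
  set d := Fintype.card ι with hd
  have hmono : B.charpoly.Monic := B.charpoly_monic
  have hdeg : B.charpoly.natDegree = d := B.charpoly_natDegree_eq_dim
  have f : ℤ →+* ℂ := Int.castRingHom ℂ
  have hsplit : Splits (B.charpoly.map (Int.castRingHom ℂ)) := by
    have h1 : Splits (B.charpoly.map (Int.castRingHom ℂ)) :=
      IsAlgClosed.splits _
    exact h1
  have hroots : ∀ z ∈ (B.charpoly.map (Int.castRingHom ℂ)).roots, ‖z‖ ≤ R := by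
    intro z hz
    have hzr : ((B.map (⇑(Int.castRingHom ℂ))).charpoly).eval z = 0 := by
      have h2 := (mem_roots ((hmono.map (Int.castRingHom ℂ)).ne_zero)).mp hz
      rw [Matrix.charpoly_map]
      exact h2
    obtain ⟨v, hv, hvec⟩ := root_eig hzr
    refine eig_norm_le hv hvec ?_
    intro i
    have h3 : ∀ j, ‖(B.map (⇑(Int.castRingHom ℂ))) i j‖ = |((B i j : ℤ) : ℝ)| := by
      intro j
      simp [Matrix.map_apply]
    rw [Finset.sum_congr rfl fun j _ => h3 j]
    exact hR i
  have key := Polynomial.coeff_le_of_roots_le k hmono hsplit hroots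
  have hc : (B.charpoly.map (Int.castRingHom ℂ)).coeff k = ((B.charpoly.coeff k : ℤ) : ℂ) := by
    simp
  rw [hc] at key
  have hnorm : ‖((B.charpoly.coeff k : ℤ) : ℂ)‖ = |((B.charpoly.coeff k : ℤ) : ℝ)| := by simp
  rw [hnorm] at key
  calc |((B.charpoly.coeff k : ℤ) : ℝ)| ≤ R ^ (B.charpoly.natDegree - k) * (B.charpoly.natDegree.choose k) := key
  _ ≤ R ^ d * 2 ^ d := by
      apply mul_le_mul
      · exact pow_le_pow_right₀ hR1 (by omega)
      · rw [hdeg]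
        exact_mod_cast Nat.cast_le.mpr (my_choose_le d k)
      · positivity
      · positivity

lemma root_lower_bound : ∀ (d : ℕ) (q : ℤ[X]), q.Monic → q.natDegree ≤ d →
    ∀ {x : ℝ}, x ≠ 0 → (q.map (Int.castRingHom ℝ)).eval x = 0 →
    ∀ {H : ℝ}, (∀ k, |((q.coeff k : ℤ) : ℝ)| ≤ H) → 1 ≤ (d : ℝ) * H * |x| := by
  intro d
  induction d with
  | zero =>
    intro q hm hdeg x hx hroot H hH
    exfalso
    have : q = 1 := hm.natDegree_eq_zero.mp (Nat.le_zero.mp hdeg)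
    rw [this] at hroot
    simp at hroot
  | succ d ih =>
    intro q hm hdeg x hx hroot H hH
    have hH0 : 0 ≤ H := le_trans (abs_nonneg _) (hH 0)
    by_cases h0 : q.coeff 0 = 0
    · -- q = divX q * X
      have hD : q.natDegree ≠ 0 := by
        intro h
        rw [hm.natDegree_eq_zero.mp h] at h0
        simp at h0
      have hq : q.divX * X = q := by
        have := q.divX_mul_X_add
        rwa [h0, map_zero, add_zero] at this
      have hdm : q.divX.Monic := by
        unfold Polynomial.Monic Polynomial.leadingCoeff
        rw [q.natDegree_divX_eq_natDegree_tsub_one, Polynomial.coeff_divX,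
          show q.natDegree - 1 + 1 = q.natDegree by omega]
        exact hm
      have hddeg : q.divX.natDegree ≤ d := by
        rw [q.natDegree_divX_eq_natDegree_tsub_one]; omega
      have hdroot : (q.divX.map (Int.castRingHom ℝ)).eval x = 0 := by
        have hmap : q.map (Int.castRingHom ℝ) = (q.divX.map (Int.castRingHom ℝ)) * X := by
          conv_lhs => rw [← hq]
          rw [Polynomial.map_mul, Polynomial.map_X]
        rw [hmap, Polynomial.eval_mul, Polynomial.eval_X] at hroot
        exact (mul_eq_zero.mp hroot).resolve_right hx
      have hdH : ∀ k, |((q.divX.coeff k : ℤ) : ℝ)| ≤ H := by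
        intro k; rw [Polynomial.coeff_divX]; exact hH (k+1)
      calc (1:ℝ) ≤ (d : ℝ) * H * |x| := ih q.divX hdm hddeg hx hdroot hdH
      _ ≤ ((d+1 : ℕ) : ℝ) * H * |x| := by
          apply mul_le_mul_of_nonneg_right _ (abs_nonneg _)
          apply mul_le_mul_of_nonneg_right _ hH0
          push_cast; linarith
    · have h1 : (1:ℝ) ≤ |((q.coeff 0 : ℤ) : ℝ)| := by
        rw [← Int.cast_abs]
        exact_mod_cast Int.one_le_abs h0
      have hH1 : 1 ≤ H := le_trans h1 (hH 0)
      rcases le_or_gt 1 |x| with hx1 | hx1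
      · calc (1:ℝ) = 1 * 1 * 1 := by ring
        _ ≤ ((d+1 : ℕ) : ℝ) * H * |x| := by
            apply mul_le_mul (mul_le_mul (by push_cast; linarith) hH1 one_pos.le (by positivity)) hx1
              one_pos.le (by positivity)
      · set qr := q.map (Int.castRingHom ℝ) with hqr
        have hDeq : qr.natDegree = q.natDegree := hm.natDegree_map _
        set D := q.natDegree with hDdef
        have hsum : qr.eval x = ∑ k ∈ Finset.range (D + 1), qr.coeff k * x ^ k := by
          rw [Polynomial.eval_eq_sum_range, hDeq]
        rw [hsum, Finset.sum_range_succ'] at hroot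
        have hcoeff0 : qr.coeff 0 * x ^ 0 = -∑ k ∈ Finset.range D, qr.coeff (k+1) * x ^ (k+1) := by
          linarith [hroot]
        have habs : |((q.coeff 0 : ℤ) : ℝ)| ≤ (D : ℝ) * H * |x| := by
          have : ((q.coeff 0 : ℤ) : ℝ) = -∑ k ∈ Finset.range D, qr.coeff (k+1) * x ^ (k+1) := by
            rw [← hcoeff0]; simp [hqr]
          rw [this, abs_neg]
          calc |∑ k ∈ Finset.range D, qr.coeff (k+1) * x ^ (k+1)|
              ≤ ∑ k ∈ Finset.range D, |qr.coeff (k+1) * x ^ (k+1)| :=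
                Finset.abs_sum_le_sum_abs _ _
          _ ≤ ∑ k ∈ Finset.range D, H * |x| := by
              apply Finset.sum_le_sum
              intro k _
              rw [abs_mul, abs_pow]
              have e1 : |qr.coeff (k+1)| ≤ H := by
                rw [hqr, Polynomial.coeff_map]
                exact hH (k+1)
              have e2 : |x| ^ (k+1) ≤ |x| := by
                calc |x| ^ (k+1) = |x| ^ k * |x| := by ring
                _ ≤ 1 * |x| := by
                    apply mul_le_mul_of_nonneg_right _ (abs_nonneg _)
                    exact pow_le_one₀ (abs_nonneg _) hx1.le
                _ = |x| := one_mul _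
              exact mul_le_mul e1 e2 (by positivity) hH0
          _ = (D : ℝ) * H * |x| := by rw [Finset.sum_const, Finset.card_range]; push_cast; ring
        calc (1:ℝ) ≤ (D : ℝ) * H * |x| := le_trans h1 habs
        _ ≤ ((d+1 : ℕ) : ℝ) * H * |x| := by
            apply mul_le_mul_of_nonneg_right _ (abs_nonneg _)
            apply mul_le_mul_of_nonneg_right _ hH0
            exact_mod_cast Nat.cast_le.mpr hdeg

/-- The maximum absolute value of the entries of an integer matrix. -/
def maxEntry {m n : ℕ} (A : Matrix (Fin m) (Fin n) ℤ) : ℕ :=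
  (Finset.univ ×ˢ Finset.univ).sup fun p : Fin m × Fin n => (A p.1 p.2).natAbs

/-- Let `A` be an `n × n` symmetric positive definite integer matrix.  Any two distinct
eigenvalues `ν < μ` of `A` satisfy `(μ - ν)/ν ≥ 8^(-n) (4n)^(-n²) (max |A i j|)^(-2n²)`;
that is, the minimal relative gap `relgap(A)` between distinct eigenvalues satisfies
`relgap(A)⁻¹ ≤ 8^n (4n)^(n²) (max |A i j|)^(2n²)`. -/
theorem stmt14 {n : ℕ} (A : Matrix (Fin n) (Fin n) ℤ) (hsym : A.IsSymm)
    (hpd : (A.map (Int.cast : ℤ → ℝ)).PosDef) (mu nu : ℝ)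
    (hmu : ∃ v : Fin n → ℝ, v ≠ 0 ∧ (A.map (Int.cast : ℤ → ℝ)).mulVec v = mu • v)
    (hnu : ∃ v : Fin n → ℝ, v ≠ 0 ∧ (A.map (Int.cast : ℤ → ℝ)).mulVec v = nu • v)
    (hlt : nu < mu) :
    (mu - nu) / nu ≥
      ((8 : ℝ) ^ n * (4 * (n : ℝ)) ^ (n ^ 2) * (maxEntry A : ℝ) ^ (2 * n ^ 2))⁻¹ := by
  classical
  obtain ⟨u, hu0, huA⟩ := hmu
  obtain ⟨v, hv0, hvA⟩ := hnu
  -- n ≥ 1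
  have hn : 0 < n := by
    rcases Nat.eq_zero_or_pos n with h | h
    · subst h; exact absurd (funext fun i => i.elim0 : u = 0) hu0
    · exact h
  haveI : Nonempty (Fin n) := ⟨⟨0, hn⟩⟩
  set M : ℕ := maxEntry A with hMdef
  -- diagonal entries are positive, so M ≥ 1
  have hdiag : ∀ i, (0 : ℤ) < A i i := by
    intro i
    have h := hpd.dotProduct_mulVec_pos (x := Pi.single i 1) (by
      intro h
      have := congrFun h i
      simp [Pi.single_apply] at this)
    have he : star (Pi.single i (1:ℝ)) ⬝ᵥ ((A.map (Int.cast : ℤ → ℝ)) *ᵥ Pi.single i 1)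
        = ((A i i : ℤ) : ℝ) := by
      simp [single_dotProduct, Matrix.mulVec, dotProduct, Pi.single_apply,
        Matrix.map_apply]
    rw [he] at h
    exact_mod_cast h
  have hM1 : 1 ≤ M := by
    have h1 : 1 ≤ (A ⟨0, hn⟩ ⟨0, hn⟩).natAbs := by
      have := hdiag ⟨0, hn⟩; omega
    rw [hMdef]
    unfold maxEntry
    exact le_trans h1 (Finset.le_sup (f := fun p : Fin n × Fin n => (A p.1 p.2).natAbs)
      (b := (⟨0, hn⟩, ⟨0, hn⟩)) (by simp))
  have hM1R : (1:ℝ) ≤ (M:ℝ) := by exact_mod_cast hM1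
  have hn1R : (1:ℝ) ≤ (n:ℝ) := by exact_mod_cast hn
  -- nu > 0
  have hvv : 0 < v ⬝ᵥ v := by
    obtain ⟨i, hi⟩ := Function.ne_iff.mp hv0
    apply Finset.sum_pos' (fun j _ => mul_self_nonneg (v j))
    exact ⟨i, Finset.mem_univ _, mul_self_pos.mpr hi⟩
  have hnupos : 0 < nu := by
    have h := hpd.dotProduct_mulVec_pos hv0
    rw [show star v = v from rfl, hvA, dotProduct_smul] at h
    have h2 : 0 < nu * (v ⬝ᵥ v) := h
    by_contra hc
    push_neg at hc
    nlinarith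
  -- entry bound
  have hentry : ∀ i j, |((A i j : ℤ) : ℝ)| ≤ (M : ℝ) := by
    intro i j
    rw [← Int.cast_abs, Int.abs_eq_natAbs]
    have hle : (A i j).natAbs ≤ M := by
      rw [hMdef]; unfold maxEntry
      exact Finset.le_sup (f := fun p : Fin n × Fin n => (A p.1 p.2).natAbs)
        (b := (i, j)) (by simp)
    exact_mod_cast hle
  have hrowA : ∀ i, ∑ j, ‖(A.map (Int.cast : ℤ → ℝ)) i j‖ ≤ (n : ℝ) * M := by
    intro i
    calc ∑ j, ‖(A.map (Int.cast : ℤ → ℝ)) i j‖ = ∑ j, |((A i j : ℤ) : ℝ)| := by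
          simp [Matrix.map_apply, Real.norm_eq_abs]
    _ ≤ ∑ _j : Fin n, (M : ℝ) := Finset.sum_le_sum fun j _ => hentry i j
    _ = (n : ℝ) * M := by
        rw [Finset.sum_const, Finset.card_univ, Fintype.card_fin, nsmul_eq_mul]
  have hnuM : nu ≤ (n : ℝ) * M := by
    have := eig_norm_le hv0 hvA hrowA
    rw [Real.norm_eq_abs] at this
    exact le_trans (le_abs_self nu) this
  -- the difference matrix B
  set B : Matrix (Fin n × Fin n) (Fin n × Fin n) ℤ := fun p q =>
    (if p.2 = q.2 then A p.1 q.1 else 0) - (if p.1 = q.1 then A p.2 q.2 else 0) with hBdef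
  set Br := B.map (⇑(Int.castRingHom ℝ)) with hBr
  have hBre : ∀ p q, Br p q = (if p.2 = q.2 then ((A p.1 q.1 : ℤ) : ℝ) else 0)
      - (if p.1 = q.1 then ((A p.2 q.2 : ℤ) : ℝ) else 0) := by
    intro p q
    simp only [hBr, Matrix.map_apply, hBdef, map_sub]
    split_ifs <;> simp [Matrix.map, *]
  -- the eigenvector
  set w : Fin n × Fin n → ℝ := fun p => u p.1 * v p.2 with hwdef
  have hw0 : w ≠ 0 := by
    obtain ⟨i, hi⟩ := Function.ne_iff.mp hu0
    obtain ⟨j, hj⟩ := Function.ne_iff.mp hv0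
    exact Function.ne_iff.mpr ⟨(i, j), by simpa [hwdef] using mul_ne_zero hi hj⟩
  have huA' : ∀ i, ∑ k, ((A i k : ℤ) : ℝ) * u k = mu * u i := by
    intro i
    have := congrFun huA i
    simpa [Matrix.mulVec, dotProduct, Matrix.map_apply] using this
  have hvA' : ∀ i, ∑ k, ((A i k : ℤ) : ℝ) * v k = nu * v i := by
    intro i
    have := congrFun hvA i
    simpa [Matrix.mulVec, dotProduct, Matrix.map_apply] using this
  have hweig : Br.mulVec w = (mu - nu) • w := by
    funext p
    have expand : (Br.mulVec w) p = ∑ k, ∑ l, Br p (k, l) * (u k * v l) := by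
      simp [Matrix.mulVec, dotProduct, Fintype.sum_prod_type, hwdef]
    have h1 : ∀ k l, Br p (k, l) * (u k * v l)
        = (if p.2 = l then ((A p.1 k : ℤ) : ℝ) * (u k * v l) else 0)
          - (if p.1 = k then ((A p.2 l : ℤ) : ℝ) * (u k * v l) else 0) := by
      intro k l
      rw [hBre, sub_mul]
      congr 1 <;> split_ifs <;> simp
    have e1 : ∑ k, ∑ l, (if p.2 = l then ((A p.1 k : ℤ) : ℝ) * (u k * v l) else 0)
        = mu * u p.1 * v p.2 := by
      have inner : ∀ k, ∑ l, (if p.2 = l then ((A p.1 k : ℤ) : ℝ) * (u k * v l) else 0)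
          = ((A p.1 k : ℤ) : ℝ) * u k * v p.2 := by
        intro k
        rw [Finset.sum_ite_eq]
        simp [mul_assoc]
      rw [Finset.sum_congr rfl fun k _ => inner k, ← Finset.sum_mul, huA' p.1]
    have e2 : ∑ k, ∑ l, (if p.1 = k then ((A p.2 l : ℤ) : ℝ) * (u k * v l) else 0)
        = nu * v p.2 * u p.1 := by
      have inner : ∀ k, ∑ l, (if p.1 = k then ((A p.2 l : ℤ) : ℝ) * (u k * v l) else 0)
          = (if p.1 = k then (∑ l, ((A p.2 l : ℤ) : ℝ) * v l) * u k else 0) := by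
        intro k
        split_ifs with h
        · rw [Finset.sum_mul]
          congr 1; funext l; ring
        · simp
      rw [Finset.sum_congr rfl fun k _ => inner k, Finset.sum_ite_eq]
      simp only [Finset.mem_univ, if_true, hvA' p.2]
      try ring
    rw [expand, Finset.sum_congr rfl fun k _ => Finset.sum_congr rfl fun l _ => h1 k l]
    simp only [Finset.sum_sub_distrib]
    rw [e1, e2]
    simp only [Pi.smul_apply, smul_eq_mul, hwdef]
    ring
  -- row sums of B
  have hrowB : ∀ p, ∑ q, |((B p q : ℤ) : ℝ)| ≤ 2 * n * M := by
    intro p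
    have hterm : ∀ q : Fin n × Fin n, |((B p q : ℤ) : ℝ)|
        ≤ (if p.2 = q.2 then |((A p.1 q.1 : ℤ) : ℝ)| else 0)
          + (if p.1 = q.1 then |((A p.2 q.2 : ℤ) : ℝ)| else 0) := by
      intro q
      have : ((B p q : ℤ) : ℝ) = (if p.2 = q.2 then ((A p.1 q.1 : ℤ) : ℝ) else 0)
          - (if p.1 = q.1 then ((A p.2 q.2 : ℤ) : ℝ) else 0) := by
        simp only [hBdef, Int.cast_sub, apply_ite (Int.cast : ℤ → ℝ), Int.cast_zero]
      rw [this]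
      refine (abs_sub _ _).trans ?_
      gcongr <;> split_ifs <;> simp
    calc ∑ q, |((B p q : ℤ) : ℝ)|
        ≤ ∑ q : Fin n × Fin n, ((if p.2 = q.2 then |((A p.1 q.1 : ℤ) : ℝ)| else 0)
          + (if p.1 = q.1 then |((A p.2 q.2 : ℤ) : ℝ)| else 0)) :=
          Finset.sum_le_sum fun q _ => hterm q
    _ = (∑ k, |((A p.1 k : ℤ) : ℝ)|) + ∑ l, |((A p.2 l : ℤ) : ℝ)| := by
        rw [Finset.sum_add_distrib]
        congr 1
        · rw [Fintype.sum_prod_type]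
          simp [Finset.sum_ite_eq]
        · rw [Fintype.sum_prod_type_right]
          simp [Finset.sum_ite_eq]
    _ ≤ (n : ℝ) * M + (n : ℝ) * M := by
        gcongr
        · calc ∑ k, |((A p.1 k : ℤ) : ℝ)| ≤ ∑ _k : Fin n, (M:ℝ) :=
            Finset.sum_le_sum fun k _ => hentry _ _
          _ = (n : ℝ) * M := by
              rw [Finset.sum_const, Finset.card_univ, Fintype.card_fin, nsmul_eq_mul]
        · calc ∑ l, |((A p.2 l : ℤ) : ℝ)| ≤ ∑ _l : Fin n, (M:ℝ) :=
            Finset.sum_le_sum fun l _ => hentry _ _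
          _ = (n : ℝ) * M := by
              rw [Finset.sum_const, Finset.card_univ, Fintype.card_fin, nsmul_eq_mul]
    _ = 2 * n * M := by ring
  -- coefficient bound for charpoly of B
  have hcard : Fintype.card (Fin n × Fin n) = n ^ 2 := by
    simp [Fintype.card_prod, pow_two]
  have hR1 : (1:ℝ) ≤ 2 * n * M := by nlinarith
  set H : ℝ := (2 * (n:ℝ) * M) ^ (n ^ 2) * 2 ^ (n ^ 2) with hHdef
  have hcoeff : ∀ k, |((B.charpoly.coeff k : ℤ) : ℝ)| ≤ H := by
    intro k
    have h := charpoly_coeff_bound B hR1 hrowB k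
    rwa [hcard] at h
  have hdelta : 0 < mu - nu := sub_pos.mpr hlt
  have hroot : ((B.charpoly).map (Int.castRingHom ℝ)).eval (mu - nu) = 0 := by
    rw [← Matrix.charpoly_map, ← hBr]
    exact eig_root hw0 hweig
  have hdeg : B.charpoly.natDegree ≤ n ^ 2 := by
    rw [B.charpoly_natDegree_eq_dim, hcard]
  have hmain := root_lower_bound (n ^ 2) B.charpoly B.charpoly_monic hdeg
    (ne_of_gt hdelta) hroot hcoeff
  rw [abs_of_pos hdelta] at hmain
  push_cast at hmain
  -- final arithmetic
  set P : ℝ := 8 ^ n * (4 * (n:ℝ)) ^ (n ^ 2) * (M : ℝ) ^ (2 * n ^ 2) with hPdef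
  have hPpos : 0 < P := by positivity
  have hHpos : 0 < H := by positivity
  have key : (n:ℝ) * M * ((n:ℝ) ^ 2 * H) ≤ P := by
    have e : (2 * (n:ℝ) * M) ^ (n ^ 2) * 2 ^ (n ^ 2) = (4 * (n:ℝ)) ^ (n ^ 2) * (M:ℝ) ^ (n ^ 2) := by
      rw [← mul_pow, ← mul_pow]
      ring_nf
    have hn2p : (n:ℝ) ≤ 2 ^ n := by
      exact_mod_cast (Nat.lt_two_pow_self).le
    have hn3 : (n:ℝ) ^ 3 ≤ 8 ^ n := by
      calc (n:ℝ) ^ 3 ≤ ((2:ℝ) ^ n) ^ 3 := by gcongr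
      _ = 8 ^ n := by rw [← pow_mul, mul_comm, pow_mul]; norm_num
    have hee : n ^ 2 + 1 ≤ 2 * n ^ 2 := by
      have h1 : 1 ≤ n ^ 2 := Nat.one_le_iff_ne_zero.mpr (by positivity)
      omega
    have hm : (M:ℝ) ^ (n ^ 2 + 1) ≤ (M:ℝ) ^ (2 * n ^ 2) := pow_le_pow_right₀ hM1R hee
    calc (n:ℝ) * M * ((n:ℝ) ^ 2 * H)
        = (n:ℝ) ^ 3 * (M:ℝ) ^ (n ^ 2 + 1) * (4 * (n:ℝ)) ^ (n ^ 2) := by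
          rw [hHdef, e]; ring
    _ ≤ 8 ^ n * (M:ℝ) ^ (2 * n ^ 2) * (4 * (n:ℝ)) ^ (n ^ 2) := by
        apply mul_le_mul_of_nonneg_right _ (by positivity)
        exact mul_le_mul hn3 hm (by positivity) (by positivity)
    _ = P := by rw [hPdef]; ring
  have h2 : nu ≤ P * (mu - nu) := by
    calc nu ≤ (n:ℝ) * M := hnuM
    _ ≤ (n:ℝ) * M * ((n:ℝ) ^ 2 * H * (mu - nu)) := le_mul_of_one_le_right (by positivity) hmain
    _ = ((n:ℝ) * M * ((n:ℝ) ^ 2 * H)) * (mu - nu) := by ring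
    _ ≤ P * (mu - nu) := mul_le_mul_of_nonneg_right key hdelta.le
  rw [ge_iff_le, le_div_iff₀ hnupos]
  calc P⁻¹ * nu ≤ P⁻¹ * (P * (mu - nu)) := by
        apply mul_le_mul_of_nonneg_left h2 (by positivity)
  _ = mu - nu := by field_simp
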